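/- Let $X = (X_1, X_2)$ with $\|X_1\|_2 = \|X_2\|_2 = 1$, $X_1^T X_2 = -\hat\rho$, $0 < \hat\rho < 1$, $\hat\varphi^2 := 1-\hat\rho$. Let $\beta_1^0 \ge \beta_2^0 > 0$ and suppose $\beta_2^0 \le \lambda/\hat\varphi^2 \le \beta_2^0 + (\beta_1^0 - \beta_2^0)/\hat\varphi^2$. Then $\beta^* := (\beta_1^0 - (1-\hat\varphi^2)\beta_2^0 - \lambda, 0)$ minimizes $\beta \mapsto \|X(\beta - \beta^0)\|_2^2 + 2\lambda\|\beta\|_1$, and $\|X(\beta^* - \beta^0)\|_2^2 = \hat\varphi^2(2-\hat\varphi^2)(\beta_2^0)^2 + \lambda^2$. -/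
import Mathlib


open scoped RealInnerProductSpace

lemma norm_smul_add_smul_sq {E : Type*} [NormedAddCommGroup E] [InnerProductSpace ℝ E]
    (x y : E) (a b : ℝ) :
    ‖a • x + b • y‖ ^ 2 = a ^ 2 * ‖x‖ ^ 2 + 2 * (a * b) * ⟪x, y⟫ + b ^ 2 * ‖y‖ ^ 2 := by
  rw [norm_add_sq_real, real_inner_smul_left, real_inner_smul_right,
    norm_smul, norm_smul]
  simp only [Real.norm_eq_abs, mul_pow, sq_abs]
  ring

/-- noiseless Lasso with p = s₀ = 2, Case 2. -/
theorem stmt5 (n : ℕ) (X1 X2 : EuclideanSpace ℝ (Fin n)) (ρ lam β10 β20 : ℝ)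
    (h1 : ‖X1‖ = 1) (h2 : ‖X2‖ = 1) (hρ : ⟪X1, X2⟫ = -ρ)
    (hρ0 : 0 < ρ) (hρ1 : ρ < 1) (hlam : 0 < lam)
    (hβ : β10 ≥ β20) (hβ2 : 0 < β20)
    (hcase1 : β20 ≤ lam / (1 - ρ))
    (hcase2 : lam / (1 - ρ) ≤ β20 + (β10 - β20) / (1 - ρ)) :
    (∀ b1 b2 : ℝ,
      ‖((β10 - (1 - (1 - ρ)) * β20 - lam) - β10) • X1 + ((0 : ℝ) - β20) • X2‖ ^ 2
          + 2 * lam * (|β10 - (1 - (1 - ρ)) * β20 - lam| + |(0 : ℝ)|)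
        ≤ ‖(b1 - β10) • X1 + (b2 - β20) • X2‖ ^ 2 + 2 * lam * (|b1| + |b2|)) ∧
    ‖((β10 - (1 - (1 - ρ)) * β20 - lam) - β10) • X1 + ((0 : ℝ) - β20) • X2‖ ^ 2
      = (1 - ρ) * (2 - (1 - ρ)) * β20 ^ 2 + lam ^ 2 := by
  have hφ : (0:ℝ) < 1 - ρ := by linarith
  have hc1 : β20 * (1 - ρ) ≤ lam := by
    rw [le_div_iff₀ hφ] at hcase1; linarith
  have hc2 : lam ≤ β10 - ρ * β20 := by
    rw [div_le_iff₀ hφ] at hcase2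
    have : (β20 + (β10 - β20) / (1 - ρ)) * (1 - ρ) = β20 * (1 - ρ) + (β10 - β20) := by
      field_simp
    nlinarith [hcase2, this]
  have habs : |β10 - (1 - (1 - ρ)) * β20 - lam| = β10 - (1 - (1 - ρ)) * β20 - lam := by
    apply abs_of_nonneg; nlinarith
  constructor
  · intro b1 b2
    rw [norm_smul_add_smul_sq, norm_smul_add_smul_sq, h1, h2, hρ, habs, abs_zero]
    have hkey : 0 ≤ lam * |b2| + (ρ * lam - (1 - ρ ^ 2) * β20) * b2 := by
      rcases le_or_gt 0 b2 with hb | hb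
      · rw [abs_of_nonneg hb]
        nlinarith [mul_nonneg hb (mul_nonneg (show (0:ℝ) ≤ 1 + ρ by linarith)
          (show (0:ℝ) ≤ lam - β20 * (1 - ρ) by linarith))]
      · rw [abs_of_neg hb]
        nlinarith [mul_nonneg (neg_nonneg.mpr hb.le) (mul_nonneg hφ.le hlam.le),
          mul_nonneg (neg_nonneg.mpr hb.le)
            (mul_nonneg (mul_nonneg hφ.le (show (0:ℝ) ≤ 1 + ρ by linarith)) hβ2.le)]
    have hQ : 0 ≤ (b1 - (β10 - ρ * β20 - lam)) ^ 2 + b2 ^ 2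
        - 2 * ρ * (b1 - (β10 - ρ * β20 - lam)) * b2 := by
      nlinarith [sq_nonneg (b1 - (β10 - ρ * β20 - lam) - b2),
        sq_nonneg (b1 - (β10 - ρ * β20 - lam)), sq_nonneg b2,
        mul_nonneg hρ0.le (sq_nonneg (b1 - (β10 - ρ * β20 - lam) - b2))]
    have hb1 : 0 ≤ lam * (|b1| - b1) :=
      mul_nonneg hlam.le (by linarith [le_abs_self b1])
    nlinarith [hkey, hQ, hb1]
  · rw [norm_smul_add_smul_sq, h1, h2, hρ]
    ring
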